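/- arXiv:1303.5324 — 2 statements merged into one kernel-verified Lean document; each statement's English description precedes it below -/
import Mathlib

section
/- Every real sequence is a difference of two Stieltjes moment sequences: for every sequence (m_n) of real numbers (n ∈ ℕ) there exist finite positive Borel measures μ₊ and μ₋ on ℝ, each supported on [0, ∞) (i.e., μ₊((−∞,0)) = μ₋((−∞,0)) = 0), such that for every n ∈ ℕ the function x ↦ xⁿ is integrable with respect to both μ₊ and μ₋, and m_n = ∫ xⁿ dμ₊(x) − ∫ xⁿ dμ₋(x) for all n. -/
open MeasureTheory

section StieltjesAux
open Finset fwdDiff Nat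

lemma fwdDiff_pow (h : ℝ) (k : ℕ) :
    Δ_[h] (fun x : ℝ => x ^ k) =
      fun x => ∑ i ∈ Finset.range k, ((k.choose i : ℝ) * h ^ (k - i)) * x ^ i := by
  ext x
  simp only [fwdDiff]
  rw [add_pow, Finset.sum_range_succ]
  simp [mul_comm, mul_assoc, mul_left_comm]

lemma fwdDiff_iter_pow_of_lt (h : ℝ) : ∀ n k : ℕ, k < n →
    (Δ_[h])^[n] (fun x : ℝ => x ^ k) = fun _ => 0 := by
  intro n
  induction n with
  | zero => intro k hk; omega
  | succ n ih =>
    intro k hk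
    rw [Function.iterate_succ_apply, fwdDiff_pow]
    have : (fun x : ℝ => ∑ i ∈ Finset.range k, ((k.choose i : ℝ) * h ^ (k - i)) * x ^ i)
        = ∑ i ∈ Finset.range k, ((k.choose i : ℝ) * h ^ (k - i)) • (fun x : ℝ => x ^ i) := by
      ext x; simp [Finset.sum_apply]
    rw [this, fwdDiff_iter_finset_sum]
    ext x
    rw [Finset.sum_apply]
    apply Finset.sum_eq_zero
    intro i hi
    have hi' : i < n := lt_of_lt_of_le (Finset.mem_range.mp hi) (by omega)
    rw [fwdDiff_iter_const_smul, ih i hi']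
    simp

lemma fwdDiff_iter_pow_self (h : ℝ) (n : ℕ) :
    (Δ_[h])^[n] (fun x : ℝ => x ^ n) = fun _ => h ^ n * n ! := by
  induction n with
  | zero => ext x; simp
  | succ n ih =>
    rw [Function.iterate_succ_apply, fwdDiff_pow]
    have : (fun x : ℝ => ∑ i ∈ Finset.range (n+1), (((n+1).choose i : ℝ) * h ^ (n+1 - i)) * x ^ i)
        = ∑ i ∈ Finset.range (n+1), (((n+1).choose i : ℝ) * h ^ (n+1 - i)) • (fun x : ℝ => x ^ i) := by
      ext x; simp [Finset.sum_apply]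
    rw [this, fwdDiff_iter_finset_sum, Finset.sum_range_succ]
    have h1 : ∀ i ∈ Finset.range n,
        (Δ_[h])^[n] ((((n+1).choose i : ℝ) * h ^ (n+1 - i)) • (fun x : ℝ => x ^ i)) = 0 := by
      intro i hi
      rw [fwdDiff_iter_const_smul, fwdDiff_iter_pow_of_lt h n i (Finset.mem_range.mp hi)]
      ext x; simp
    rw [Finset.sum_eq_zero h1, zero_add, fwdDiff_iter_const_smul, ih]
    ext x
    have hs : n + 1 - n = 1 := by omega
    simp only [Pi.smul_apply, smul_eq_mul, Nat.choose_succ_self_right, hs,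
      pow_one, Nat.factorial_succ]
    push_cast
    ring

lemma sum_shift_pow (T : ℝ) (n k : ℕ) :
    ∑ j ∈ Finset.range (n+1), ((-1:ℝ)^(n-j) * (n.choose j)) * ((j:ℝ)*T)^k
      = (Δ_[T])^[n] (fun x : ℝ => x^k) 0 := by
  rw [fwdDiff_iter_eq_sum_shift]
  apply Finset.sum_congr rfl
  intro j hj
  rw [zsmul_eq_mul]
  push_cast
  ring_nf

/-- moment of order `k` of the signed block with weight `c`, scale `T`, order `n`. -/
noncomputable def Sblock (c T : ℝ) (n k : ℕ) : ℝ :=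
  c * ∑ j ∈ Finset.range (n+1), ((-1:ℝ)^(n-j) * (n.choose j)) * ((j:ℝ)*T)^k

lemma Sblock_eq (c T : ℝ) (n k : ℕ) :
    Sblock c T n k = c * (Δ_[T])^[n] (fun x : ℝ => x^k) 0 := by
  rw [Sblock, sum_shift_pow]

lemma Sblock_of_lt (c T : ℝ) {n k : ℕ} (h : k < n) : Sblock c T n k = 0 := by
  rw [Sblock_eq, fwdDiff_iter_pow_of_lt T n k h]; simp

lemma Sblock_self (c T : ℝ) (n : ℕ) : Sblock c T n n = c * (T ^ n * n !) := by
  rw [Sblock_eq, fwdDiff_iter_pow_self]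

/-- recursively: `(stj m n).1` = weight `c n`, `(stj m n).2` = scale `T n`. -/
noncomputable def stj (m : ℕ → ℝ) : ℕ → ℝ × ℝ
  | n =>
    let d : ℝ := m n - ∑ i : Fin n, Sblock (stj m i).1 (stj m i).2 i n
    let T : ℝ := max 1 (|d| * 4^n * n^n)
    (d / (T^n * n !), T)
termination_by n => n
decreasing_by all_goals exact i.2

/-- the residual `d n`. -/
noncomputable def Dd (m : ℕ → ℝ) (n : ℕ) : ℝ :=
  m n - ∑ i ∈ Finset.range n, Sblock (stj m i).1 (stj m i).2 i n

lemma stj_def (m : ℕ → ℝ) (n : ℕ) :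
    stj m n = (Dd m n / ((max 1 (|Dd m n| * 4^n * n^n))^n * n !),
      max 1 (|Dd m n| * 4^n * n^n)) := by
  rw [stj, Dd]
  simp [Fin.sum_univ_eq_sum_range (fun i => Sblock (stj m i).1 (stj m i).2 i n)]

lemma one_le_T (m : ℕ → ℝ) (n : ℕ) : 1 ≤ (stj m n).2 := by
  rw [stj_def]; exact le_max_left _ _

lemma T_pos (m : ℕ → ℝ) (n : ℕ) : 0 < (stj m n).2 :=
  lt_of_lt_of_le one_pos (one_le_T m n)

lemma telescope (m : ℕ → ℝ) (k : ℕ) :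
    ∑ n ∈ Finset.range (k+1), Sblock (stj m n).1 (stj m n).2 n k = m k := by
  rw [Finset.sum_range_succ, Sblock_self]
  have hT0 := T_pos m k
  have hT : (0:ℝ) < (stj m k).2 ^ k * k ! := by positivity
  have hc : (stj m k).1 = Dd m k / ((stj m k).2 ^ k * k !) := by
    conv_lhs => rw [stj_def]
    rw [stj_def]
  rw [hc, div_mul_cancel₀ _ (ne_of_gt hT), Dd]
  ring

/-- absolute mass-weighted `k`-th power sum of block `n`. -/
noncomputable def Ablock (m : ℕ → ℝ) (n k : ℕ) : ℝ :=
  |(stj m n).1| * ∑ j ∈ Finset.range (n+1), (n.choose j : ℝ) * ((j:ℝ) * (stj m n).2)^k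

lemma Ablock_nonneg (m : ℕ → ℝ) (n k : ℕ) : 0 ≤ Ablock m n k := by
  have hT := T_pos m n
  apply mul_nonneg (abs_nonneg _)
  apply Finset.sum_nonneg
  intro j _
  positivity

lemma Ablock_le (m : ℕ → ℝ) {n k : ℕ} (h : k < n) : Ablock m n k ≤ (1/2)^n := by
  set T := (stj m n).2 with hTdef
  have hT1 : 1 ≤ T := one_le_T m n
  have hT0 : 0 < T := T_pos m n
  have hn1 : 1 ≤ n := by omega
  have hnn : (0:ℝ) < (n:ℝ)^n := by
    have : (0:ℝ) < (n:ℝ) := by exact_mod_cast Nat.pos_of_ne_zero (by omega)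
    positivity
  have hfac : (1:ℝ) ≤ (n ! : ℝ) := by exact_mod_cast Nat.one_le_iff_ne_zero.mpr (Nat.factorial_ne_zero n)
  have hc : |(stj m n).1| = |Dd m n| / (T^n * n !) := by
    conv_lhs => rw [stj_def]
    rw [abs_div, abs_of_pos (by positivity : (0:ℝ) < (max 1 (|Dd m n| * 4^n * n^n))^n * n !)]
    rw [hTdef, stj_def]
  -- bound the power sum
  have hsum : ∑ j ∈ Finset.range (n+1), (n.choose j : ℝ) * ((j:ℝ) * T)^k
      ≤ 2^n * ((n:ℝ) * T)^k := by
    calc ∑ j ∈ Finset.range (n+1), (n.choose j : ℝ) * ((j:ℝ) * T)^k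
        ≤ ∑ j ∈ Finset.range (n+1), (n.choose j : ℝ) * ((n:ℝ) * T)^k := by
          apply Finset.sum_le_sum
          intro j hj
          have hj' : (j:ℝ) ≤ (n:ℝ) := by
            exact_mod_cast Nat.le_of_lt_succ (Finset.mem_range.mp hj)
          have : ((j:ℝ)*T)^k ≤ ((n:ℝ)*T)^k := by
            apply pow_le_pow_left₀ (by positivity)
            exact mul_le_mul_of_nonneg_right hj' (le_of_lt hT0)
          exact mul_le_mul_of_nonneg_left this (by positivity)
      _ = 2^n * ((n:ℝ) * T)^k := by
          rw [← Finset.sum_mul]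
          congr 1
          exact_mod_cast Nat.sum_range_choose n
  have hTk : T^k / T^n ≤ 1 / T := by
    have hsplit : T^n = T^k * T^(n-k) := by
      rw [← pow_add]; congr 1; omega
    have hTnk : T ≤ T^(n-k) := by
      have : T^1 ≤ T^(n-k) := pow_le_pow_right₀ hT1 (by omega)
      simpa using this
    rw [hsplit]
    rw [div_le_div_iff₀ (by positivity) hT0]
    calc T^k * T ≤ T^k * T^(n-k) := mul_le_mul_of_nonneg_left hTnk (by positivity)
      _ = 1 * (T^k * T^(n-k)) := by ring
  calc Ablock m n k = |Dd m n| / (T^n * n !) *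
        ∑ j ∈ Finset.range (n+1), (n.choose j : ℝ) * ((j:ℝ) * T)^k := by rw [Ablock, hc]
    _ ≤ |Dd m n| / (T^n * 1) * (2^n * ((n:ℝ) * T)^k) := by
        apply mul_le_mul _ hsum _ _
        · apply div_le_div_of_nonneg_left (abs_nonneg _) (by positivity)
          exact mul_le_mul_of_nonneg_left hfac (by positivity)
        · apply Finset.sum_nonneg; intro j _; positivity
        · positivity
    _ = |Dd m n| * 2^n * (n:ℝ)^k * (T^k / T^n) := by
        rw [mul_pow]; ring
    _ ≤ |Dd m n| * 2^n * (n:ℝ)^n * (1 / T) := by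
        apply mul_le_mul _ hTk (by positivity) (by positivity)
        apply mul_le_mul_of_nonneg_left _ (by positivity)
        exact pow_le_pow_right₀ (by exact_mod_cast hn1) (le_of_lt h)
    _ ≤ (1/2)^n := by
        rcases eq_or_ne (Dd m n) 0 with hd | hd
        · rw [hd]; simp
        · have hda : 0 < |Dd m n| := abs_pos.mpr hd
          have hTge : |Dd m n| * 4^n * (n:ℝ)^n ≤ T := by
            rw [hTdef, stj_def]; exact le_max_right _ _
          calc |Dd m n| * 2^n * (n:ℝ)^n * (1 / T)
              ≤ |Dd m n| * 2^n * (n:ℝ)^n * (1 / (|Dd m n| * 4^n * (n:ℝ)^n)) := by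
                apply mul_le_mul_of_nonneg_left _ (by positivity)
                apply div_le_div_of_nonneg_left one_pos.le (by positivity) hTge
            _ = (1/2)^n := by
                rw [div_pow, one_pow]
                field_simp
                ring_nf
                rw [show (4:ℝ) = 2*2 by norm_num, mul_pow]
                ring

noncomputable def wgt (m : ℕ → ℝ) (p : ℕ × ℕ) : ℝ :=
  if p.2 ≤ p.1 then (stj m p.1).1 * ((-1:ℝ)^(p.1-p.2) * ((p.1).choose p.2)) else 0

noncomputable def pt (m : ℕ → ℝ) (p : ℕ × ℕ) : ℝ := (p.2:ℝ) * (stj m p.1).2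

lemma pt_nonneg (m : ℕ → ℝ) (p : ℕ × ℕ) : 0 ≤ pt m p := by
  have := T_pos m p.1
  rw [pt]; positivity

lemma summable_Ablock (m : ℕ → ℝ) (k : ℕ) : Summable (fun n => Ablock m n k) := by
  rw [← summable_nat_add_iff (k+1)]
  apply Summable.of_nonneg_of_le (fun n => Ablock_nonneg m _ k)
    (fun n => Ablock_le m (show k < n + (k+1) by omega))
  have : Summable (fun n : ℕ => (1/2:ℝ)^n) := summable_geometric_of_lt_one (by norm_num) (by norm_num)
  exact (summable_nat_add_iff (k+1)).mpr this

lemma wgt_eq_zero (m : ℕ → ℝ) {n j : ℕ} (h : ¬ j ≤ n) : wgt m (n, j) = 0 := by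
  rw [wgt, if_neg h]

lemma fiber_sum (m : ℕ → ℝ) (k n : ℕ) :
    ∑' j : ℕ, |wgt m (n, j)| * (pt m (n, j))^k = Ablock m n k := by
  rw [tsum_eq_sum (s := Finset.range (n+1))
    (fun j hj => by rw [wgt_eq_zero m (by simpa using hj)]; simp)]
  rw [Ablock, Finset.mul_sum]
  apply Finset.sum_congr rfl
  intro j hj
  have hj' : j ≤ n := by simpa using Nat.le_of_lt_succ (Finset.mem_range.mp hj)
  rw [wgt, if_pos hj', pt]
  rw [abs_mul, abs_mul, abs_pow, abs_neg, abs_one, one_pow, one_mul,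
    Nat.abs_cast]
  ring

lemma summable_Babs (m : ℕ → ℝ) (k : ℕ) :
    Summable (fun p : ℕ × ℕ => |wgt m p| * (pt m p)^k) := by
  rw [summable_prod_of_nonneg (fun p => by
    have := pt_nonneg m p
    exact mul_nonneg (abs_nonneg _) (by positivity))]
  constructor
  · intro n
    apply summable_of_ne_finset_zero (s := Finset.range (n+1))
    intro j hj
    rw [wgt_eq_zero m (by simpa using hj)]; simp
  · apply Summable.congr (summable_Ablock m k)
    intro n
    exact (fiber_sum m k n).symm

lemma summable_abs_wgt (m : ℕ → ℝ) : Summable (fun p : ℕ × ℕ => |wgt m p|) := by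
  simpa using summable_Babs m 0

lemma summable_wpow (m : ℕ → ℝ) (k : ℕ) :
    Summable (fun p : ℕ × ℕ => wgt m p * (pt m p)^k) := by
  rw [← summable_abs_iff]
  apply Summable.congr (summable_Babs m k)
  intro p
  rw [abs_mul, abs_of_nonneg (by have := pt_nonneg m p; positivity : (0:ℝ) ≤ (pt m p)^k)]

lemma tsum_wpow (m : ℕ → ℝ) (k : ℕ) :
    ∑' p : ℕ × ℕ, wgt m p * (pt m p)^k = m k := by
  rw [Summable.tsum_prod (summable_wpow m k)]
  have hinner : ∀ n : ℕ, ∑' j : ℕ, wgt m (n, j) * (pt m (n, j))^k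
      = Sblock (stj m n).1 (stj m n).2 n k := by
    intro n
    rw [tsum_eq_sum (s := Finset.range (n+1))
      (fun j hj => by rw [wgt_eq_zero m (by simpa using hj)]; simp)]
    rw [Sblock, Finset.mul_sum]
    apply Finset.sum_congr rfl
    intro j hj
    have hj' : j ≤ n := Nat.le_of_lt_succ (Finset.mem_range.mp hj)
    rw [wgt, if_pos hj', pt]
    ring
  rw [tsum_congr hinner]
  rw [tsum_eq_sum (s := Finset.range (k+1)) (fun n hn => by
    exact Sblock_of_lt _ _ (by simpa using hn))]
  exact telescope m k

noncomputable def meas (m : ℕ → ℝ) (v : ℕ × ℕ → ℝ) : Measure ℝ :=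
  Measure.sum (fun p => ENNReal.ofReal (v p) • Measure.dirac (pt m p))

lemma meas_finite (m : ℕ → ℝ) (v : ℕ × ℕ → ℝ) (hv2 : ∀ p, v p ≤ |wgt m p|) :
    IsFiniteMeasure (meas m v) := by
  constructor
  rw [meas, Measure.sum_apply _ MeasurableSet.univ]
  have : ∀ p : ℕ × ℕ, (ENNReal.ofReal (v p) • Measure.dirac (pt m p)) Set.univ
      = ENNReal.ofReal (v p) := by
    intro p; simp
  rw [tsum_congr this]
  calc ∑' p : ℕ × ℕ, ENNReal.ofReal (v p)
      ≤ ∑' p : ℕ × ℕ, ENNReal.ofReal (|wgt m p|) :=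
        ENNReal.tsum_le_tsum (fun p => ENNReal.ofReal_le_ofReal (hv2 p))
    _ = ENNReal.ofReal (∑' p : ℕ × ℕ, |wgt m p|) :=
        (ENNReal.ofReal_tsum_of_nonneg (fun p => abs_nonneg _) (summable_abs_wgt m)).symm
    _ < ⊤ := ENNReal.ofReal_lt_top

lemma meas_Iio (m : ℕ → ℝ) (v : ℕ × ℕ → ℝ) : meas m v (Set.Iio 0) = 0 := by
  rw [meas, Measure.sum_apply _ measurableSet_Iio]
  rw [show (0:ENNReal) = ∑' (_ : ℕ × ℕ), (0:ENNReal) by simp]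
  apply tsum_congr
  intro p
  rw [Measure.smul_apply, Measure.dirac_apply' _ measurableSet_Iio]
  rw [Set.indicator_of_notMem (by simpa using pt_nonneg m p)]
  simp

lemma meas_integrable (m : ℕ → ℝ) (v : ℕ × ℕ → ℝ) (hv2 : ∀ p, v p ≤ |wgt m p|) (k : ℕ) :
    Integrable (fun x : ℝ => x ^ k) (meas m v) := by
  refine ⟨(measurable_id.pow_const k).aestronglyMeasurable, ?_⟩
  show (∫⁻ x, (‖x ^ k‖₊ : ENNReal) ∂(meas m v)) < ⊤
  rw [meas, lintegral_sum_measure]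
  have hterm : ∀ p : ℕ × ℕ,
      ∫⁻ x, ‖x ^ k‖₊ ∂(ENNReal.ofReal (v p) • Measure.dirac (pt m p))
        = ENNReal.ofReal (v p) * ENNReal.ofReal ((pt m p)^k) := by
    intro p
    rw [lintegral_smul_measure, lintegral_dirac]
    congr 1
    rw [← Real.enorm_eq_ofReal (by have := pt_nonneg m p; positivity)]
    rfl
  rw [tsum_congr hterm]
  calc ∑' p : ℕ × ℕ, ENNReal.ofReal (v p) * ENNReal.ofReal ((pt m p)^k)
      ≤ ∑' p : ℕ × ℕ, ENNReal.ofReal (|wgt m p| * (pt m p)^k) := by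
        apply ENNReal.tsum_le_tsum
        intro p
        rw [ENNReal.ofReal_mul' (by have := pt_nonneg m p; positivity)]
        exact mul_le_mul_left (ENNReal.ofReal_le_ofReal (hv2 p)) _
    _ = ENNReal.ofReal (∑' p : ℕ × ℕ, |wgt m p| * (pt m p)^k) :=
        (ENNReal.ofReal_tsum_of_nonneg
          (fun p => by have := pt_nonneg m p; positivity) (summable_Babs m k)).symm
    _ < ⊤ := ENNReal.ofReal_lt_top

lemma meas_integral (m : ℕ → ℝ) (v : ℕ × ℕ → ℝ) (hv : ∀ p, 0 ≤ v p)
    (hv2 : ∀ p, v p ≤ |wgt m p|) (k : ℕ) :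
    ∫ x : ℝ, x ^ k ∂(meas m v) = ∑' p : ℕ × ℕ, v p * (pt m p)^k := by
  rw [meas, integral_sum_measure (by rw [← meas]; exact meas_integrable m v hv2 k)]
  apply tsum_congr
  intro p
  rw [integral_smul_measure, integral_dirac, ENNReal.toReal_ofReal (hv p), smul_eq_mul]


end StieltjesAux

open Finset fwdDiff Nat in
/-- **Every real sequence is a difference of two Stieltjes moment sequences:**
for any real sequence `(mₙ)` there are finite positive Borel measures `μ₊`, `μ₋`
supported on `[0,∞)` with all power moments finite such that
`mₙ = ∫ xⁿ dμ₊ - ∫ xⁿ dμ₋` for all `n`. -/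
theorem real_seq_is_difference_of_stieltjes_moment_sequences (m : ℕ → ℝ) :
    ∃ μp μn : Measure ℝ, IsFiniteMeasure μp ∧ IsFiniteMeasure μn ∧
      μp (Set.Iio 0) = 0 ∧ μn (Set.Iio 0) = 0 ∧
      (∀ n : ℕ, Integrable (fun x : ℝ => x ^ n) μp) ∧
      (∀ n : ℕ, Integrable (fun x : ℝ => x ^ n) μn) ∧
      (∀ n : ℕ, m n = (∫ x : ℝ, x ^ n ∂μp) - ∫ x : ℝ, x ^ n ∂μn) := by
  set vp : ℕ × ℕ → ℝ := fun p => max (wgt m p) 0 with hvp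
  set vn : ℕ × ℕ → ℝ := fun p => max (-(wgt m p)) 0 with hvn
  have hvp0 : ∀ p, 0 ≤ vp p := fun p => le_max_right _ _
  have hvn0 : ∀ p, 0 ≤ vn p := fun p => le_max_right _ _
  have hvp2 : ∀ p, vp p ≤ |wgt m p| := fun p => max_le (le_abs_self _) (abs_nonneg _)
  have hvn2 : ∀ p, vn p ≤ |wgt m p| := fun p => max_le (neg_le_abs _) (abs_nonneg _)
  refine ⟨meas m vp, meas m vn, meas_finite m vp hvp2, meas_finite m vn hvn2,
    meas_Iio m vp, meas_Iio m vn, fun k => meas_integrable m vp hvp2 k,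
    fun k => meas_integrable m vn hvn2 k, fun k => ?_⟩
  rw [meas_integral m vp hvp0 hvp2 k, meas_integral m vn hvn0 hvn2 k]
  have hsp : Summable (fun p : ℕ × ℕ => vp p * (pt m p)^k) := by
    apply Summable.of_nonneg_of_le (fun p => by have := pt_nonneg m p; have := hvp0 p; positivity)
      (fun p => mul_le_mul_of_nonneg_right (hvp2 p)
        (by have := pt_nonneg m p; positivity)) (summable_Babs m k)
  have hsn : Summable (fun p : ℕ × ℕ => vn p * (pt m p)^k) := by
    apply Summable.of_nonneg_of_le (fun p => by have := pt_nonneg m p; have := hvn0 p; positivity)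
      (fun p => mul_le_mul_of_nonneg_right (hvn2 p)
        (by have := pt_nonneg m p; positivity)) (summable_Babs m k)
  rw [← Summable.tsum_sub hsp hsn]
  have : ∀ p : ℕ × ℕ, vp p * (pt m p)^k - vn p * (pt m p)^k = wgt m p * (pt m p)^k := by
    intro p
    have hd : vp p - vn p = wgt m p := by
      show max (wgt m p) 0 - max (-(wgt m p)) 0 = wgt m p
      rcases le_total (wgt m p) 0 with h | h
      · rw [max_eq_right h, max_eq_left (by linarith)]; ring
      · rw [max_eq_left h, max_eq_right (by linarith)]; ring
    rw [← hd]; ring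
  rw [tsum_congr this, tsum_wpow m k]
end

section
/- t-evolution of the moments of a KdV vessel (bounded case): in the bounded KdV vessel setting, define H_n(x,t) := C(x,t)∘X(x,t)⁻¹∘Aⁿ∘B(x,t) : ℂ² → ℂ² for every n ∈ ℕ. Then for all n and all (x,t) ∈ ℝ², ∂ₜ H_n(x,t) = i ∂ₓ H_{n+1}(x,t) + i ∂ₓ[H₀](x,t) σ₁ H_n(x,t). -/
open ContinuousLinearMap

lemma hasDerivAt_inv_aux {R : Type*} [NormedRing R] [CompleteSpace R] [NormedAlgebra ℂ R]
    {f g : ℝ → R} {f' : R} {x : ℝ}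
    (hf : HasDerivAt f f' x) (h1 : ∀ y, f y * g y = 1) (h2 : ∀ y, g y * f y = 1) :
    HasDerivAt g (-(g x * f' * g x)) x := by
  have hg : (g : ℝ → R) = fun y => Ring.inverse (f y) := by
    funext y
    exact (Ring.inverse_unit ⟨f y, g y, h1 y, h2 y⟩).symm
  have hF := ((hasFDerivAt_ringInverse (𝕜 := ℂ)
      ⟨f x, g x, h1 x, h2 x⟩).restrictScalars ℝ).comp x hf.hasFDerivAt
  have hD : HasDerivAt (fun y => Ring.inverse (f y))
      ((((-mulLeftRight ℂ R (g x) (g x)).restrictScalars ℝ).comp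
        (smulRight (1 : ℝ →L[ℝ] ℝ) f')) 1) x := hF.hasDerivAt
  rw [hg]
  convert hD using 1
  have hfx : Ring.inverse (f x) = g x := Ring.inverse_unit ⟨f x, g x, h1 x, h2 x⟩
  simp only [hfx]
  simp [mulLeftRight_apply, mul_assoc]

lemma hasDerivAt_clm_comp' {E F G : Type*} [NormedAddCommGroup E] [NormedSpace ℂ E]
    [NormedAddCommGroup F] [NormedSpace ℂ F] [NormedAddCommGroup G] [NormedSpace ℂ G]
    {c : ℝ → F →L[ℂ] G} {c' : F →L[ℂ] G} {d : ℝ → E →L[ℂ] F} {d' : E →L[ℂ] F} {x : ℝ}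
    (hc : HasDerivAt c c' x) (hd : HasDerivAt d d' x) :
    HasDerivAt (fun y => (c y).comp (d y)) (c'.comp (d x) + (c x).comp d') x := by
  have bb : IsBoundedBilinearMap ℝ (fun p : (F →L[ℂ] G) × (E →L[ℂ] F) => p.1.comp p.2) :=
    { add_left := fun f₁ f₂ g => add_comp f₁ f₂ g
      smul_left := fun r f g => smul_comp r f g
      add_right := fun f g₁ g₂ => comp_add f g₁ g₂
      smul_right := fun r f g => comp_smul f r g
      bound := ⟨1, one_pos, fun f g => by simpa using opNorm_comp_le f g⟩ }
  have hF := (bb.hasFDerivAt (c x, d x)).comp x (hc.hasFDerivAt.prodMk hd.hasFDerivAt)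
  have hD := hF.hasDerivAt
  refine hD.congr_deriv ?_
  simp [IsBoundedBilinearMap.deriv_apply]
  abel

lemma comp_cancel_aux {E F : Type*} [NormedAddCommGroup E] [NormedSpace ℂ E]
    [NormedAddCommGroup F] [NormedSpace ℂ F]
    (a b : F →L[ℂ] F) (h : a ∘L b = 1) (M : E →L[ℂ] F) : a ∘L (b ∘L M) = M := by
  rw [← comp_assoc, h, one_def, id_comp]

/-- the clean x-derivative of the moment `H_n = C X⁻¹ Aⁿ B`. -/
noncomputable def kdvHx {H : Type*} [NormedAddCommGroup H] [NormedSpace ℂ H]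
    (σ₁inv σ₂ γ : (Fin 2 → ℂ) →L[ℂ] (Fin 2 → ℂ)) (A Aζ : H →L[ℂ] H)
    (B : ℝ → ℝ → ((Fin 2 → ℂ) →L[ℂ] H)) (C : ℝ → ℝ → (H →L[ℂ] (Fin 2 → ℂ)))
    (Xinv : ℝ → ℝ → (H →L[ℂ] H)) (n : ℕ) (x t : ℝ) : (Fin 2 → ℂ) →L[ℂ] (Fin 2 → ℂ) :=
  (σ₁inv ∘L (-(σ₂ ∘L (C x t ∘L Aζ)) + γ ∘L C x t)) ∘L (Xinv x t ∘L ((A ^ n) ∘L B x t)) +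
  C x t ∘L ((-((Xinv x t ∘L ((B x t ∘L σ₂) ∘L C x t)) ∘L Xinv x t)) ∘L ((A ^ n) ∘L B x t)
    + Xinv x t ∘L ((A ^ n) ∘L ((-((A ∘L B x t) ∘L σ₂ + B x t ∘L γ)) ∘L σ₁inv)))

set_option maxHeartbeats 4000000 in
/-- **t-evolution of the moments of a KdV vessel (bounded case):**
with `H_n(x,t) = C X⁻¹ Aⁿ B`, one has
`∂ₜ H_n = i ∂ₓ H_{n+1} + i ∂ₓ[H₀] σ₁ H_n`. -/
theorem kdv_moment_t_evolution
    {H : Type*} [NormedAddCommGroup H] [InnerProductSpace ℂ H] [CompleteSpace H]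
    (σ₁ σ₁inv σ₂ γ : (Fin 2 → ℂ) →L[ℂ] (Fin 2 → ℂ))
    (hσ₁ : σ₁ ∘L σ₁inv = 1) (hσ₁inv : σ₁inv ∘L σ₁ = 1)
    (A Aζ : H →L[ℂ] H)
    (B : ℝ → ℝ → ((Fin 2 → ℂ) →L[ℂ] H))
    (C : ℝ → ℝ → (H →L[ℂ] (Fin 2 → ℂ)))
    (X Xinv : ℝ → ℝ → (H →L[ℂ] H))
    (hXinv : ∀ x t : ℝ, X x t ∘L Xinv x t = 1)
    (hXinv' : ∀ x t : ℝ, Xinv x t ∘L X x t = 1)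
    (hBx : ∀ x t : ℝ, HasDerivAt (fun y => B y t)
      ((-((A ∘L B x t) ∘L σ₂ + B x t ∘L γ)) ∘L σ₁inv) x)
    (hCx : ∀ x t : ℝ, HasDerivAt (fun y => C y t)
      (σ₁inv ∘L (-(σ₂ ∘L (C x t ∘L Aζ)) + γ ∘L C x t)) x)
    (hXx : ∀ x t : ℝ, HasDerivAt (fun y => X y t) ((B x t ∘L σ₂) ∘L C x t) x)
    (hBt : ∀ x t : ℝ, HasDerivAt (fun s => B x s)
      ((-Complex.I) • (A ∘L (((A ∘L B x t) ∘L σ₂ + B x t ∘L γ) ∘L σ₁inv))) t)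
    (hCt : ∀ x t : ℝ, HasDerivAt (fun s => C x s)
      ((-Complex.I) • ((σ₁inv ∘L (-(σ₂ ∘L (C x t ∘L Aζ)) + γ ∘L C x t)) ∘L Aζ)) t)
    (hXt : ∀ x t : ℝ, HasDerivAt (fun s => X x s)
      (Complex.I • (A ∘L ((B x t ∘L σ₂) ∘L C x t)
        - ((B x t ∘L σ₂) ∘L C x t) ∘L Aζ + (B x t ∘L γ) ∘L C x t)) t)
    (hLyap : ∀ x t : ℝ, A ∘L X x t + X x t ∘L Aζ + (B x t ∘L σ₁) ∘L C x t = 0) :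
    ∃ Hx : ℕ → ℝ → ℝ → ((Fin 2 → ℂ) →L[ℂ] (Fin 2 → ℂ)),
      (∀ (n : ℕ) (x t : ℝ),
        HasDerivAt (fun y => C y t ∘L (Xinv y t ∘L ((A ^ n) ∘L B y t))) (Hx n x t) x) ∧
      (∀ (n : ℕ) (x t : ℝ),
        HasDerivAt (fun s => C x s ∘L (Xinv x s ∘L ((A ^ n) ∘L B x s)))
          (Complex.I • Hx (n + 1) x t +
            Complex.I • ((Hx 0 x t ∘L σ₁) ∘L
              (C x t ∘L (Xinv x t ∘L ((A ^ n) ∘L B x t))))) t) := by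
  -- x-derivative of Xinv
  have hKx : ∀ x t : ℝ, HasDerivAt (fun y => Xinv y t)
      ((-((Xinv x t ∘L ((B x t ∘L σ₂) ∘L C x t)) ∘L Xinv x t))) x := by
    intro x t
    have h1 : ∀ y, X y t * Xinv y t = 1 := fun y => by rw [mul_def]; exact hXinv y t
    have h2 : ∀ y, Xinv y t * X y t = 1 := fun y => by rw [mul_def]; exact hXinv' y t
    simpa [mul_def] using hasDerivAt_inv_aux (hXx x t) h1 h2
  -- t-derivative of Xinv
  have hKt : ∀ x t : ℝ, HasDerivAt (fun s => Xinv x s)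
      (-((Xinv x t ∘L (Complex.I • (A ∘L ((B x t ∘L σ₂) ∘L C x t)
        - ((B x t ∘L σ₂) ∘L C x t) ∘L Aζ + (B x t ∘L γ) ∘L C x t))) ∘L Xinv x t)) t := by
    intro x t
    have h1 : ∀ s, X x s * Xinv x s = 1 := fun s => by rw [mul_def]; exact hXinv x s
    have h2 : ∀ s, Xinv x s * X x s = 1 := fun s => by rw [mul_def]; exact hXinv' x s
    simpa [mul_def] using hasDerivAt_inv_aux (hXt x t) h1 h2
  -- the x-derivative statement
  have hHx : ∀ (n : ℕ) (x t : ℝ),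
      HasDerivAt (fun y => C y t ∘L (Xinv y t ∘L ((A ^ n) ∘L B y t)))
        (kdvHx σ₁inv σ₂ γ A Aζ B C Xinv n x t) x := by
    intro n x t
    have h1 : HasDerivAt (fun y => (A ^ n) ∘L B y t)
        ((A ^ n) ∘L ((-((A ∘L B x t) ∘L σ₂ + B x t ∘L γ)) ∘L σ₁inv)) x := by
      simpa using hasDerivAt_clm_comp' (hasDerivAt_const x ((A : H →L[ℂ] H) ^ n)) (hBx x t)
    exact hasDerivAt_clm_comp' (hCx x t) (hasDerivAt_clm_comp' (hKx x t) h1)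
  refine ⟨kdvHx σ₁inv σ₂ γ A Aζ B C Xinv, hHx, ?_⟩
  intro n x t
  have h1 : HasDerivAt (fun s => (A ^ n) ∘L B x s)
      ((A ^ n) ∘L ((-Complex.I) • (A ∘L (((A ∘L B x t) ∘L σ₂ + B x t ∘L γ) ∘L σ₁inv)))) t := by
    simpa using hasDerivAt_clm_comp' (hasDerivAt_const t ((A : H →L[ℂ] H) ^ n)) (hBt x t)
  have hHt := hasDerivAt_clm_comp' (hCt x t) (hasDerivAt_clm_comp' (hKt x t) h1)
  -- algebraic identity between the t-derivative and the claimed value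
  have key : Complex.I • kdvHx σ₁inv σ₂ γ A Aζ B C Xinv (n + 1) x t +
      Complex.I • ((kdvHx σ₁inv σ₂ γ A Aζ B C Xinv 0 x t ∘L σ₁) ∘L
        (C x t ∘L (Xinv x t ∘L ((A ^ n) ∘L B x t)))) =
      ((-Complex.I) • ((σ₁inv ∘L (-(σ₂ ∘L (C x t ∘L Aζ)) + γ ∘L C x t)) ∘L Aζ)) ∘L
          (Xinv x t ∘L ((A ^ n) ∘L B x t)) +
        C x t ∘L
          ((-((Xinv x t ∘L (Complex.I • (A ∘L ((B x t ∘L σ₂) ∘L C x t)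
            - ((B x t ∘L σ₂) ∘L C x t) ∘L Aζ + (B x t ∘L γ) ∘L C x t))) ∘L Xinv x t)) ∘L
              ((A ^ n) ∘L B x t) +
           Xinv x t ∘L ((A ^ n) ∘L
             ((-Complex.I) • (A ∘L (((A ∘L B x t) ∘L σ₂ + B x t ∘L γ) ∘L σ₁inv))))) := by
    have hXAζ : X x t ∘L Aζ = -((B x t ∘L σ₁) ∘L C x t) - A ∘L X x t :=
      eq_sub_of_add_eq' (add_eq_zero_iff_eq_neg.mp (hLyap x t))
    have hXK : ∀ M : (Fin 2 → ℂ) →L[ℂ] H, X x t ∘L (Xinv x t ∘L M) = M :=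
      fun M => comp_cancel_aux (X x t) (Xinv x t) (hXinv x t) M
    have hAζK : ∀ M : (Fin 2 → ℂ) →L[ℂ] H, Aζ ∘L (Xinv x t ∘L M) =
        -(Xinv x t ∘L (A ∘L M)) -
          Xinv x t ∘L (B x t ∘L (σ₁ ∘L (C x t ∘L (Xinv x t ∘L M)))) := by
      intro M
      calc Aζ ∘L (Xinv x t ∘L M)
          = Xinv x t ∘L (X x t ∘L (Aζ ∘L (Xinv x t ∘L M))) :=
            (comp_cancel_aux (Xinv x t) (X x t) (hXinv' x t) _).symm
        _ = Xinv x t ∘L ((X x t ∘L Aζ) ∘L (Xinv x t ∘L M)) := by rw [comp_assoc]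
        _ = Xinv x t ∘L ((-((B x t ∘L σ₁) ∘L C x t) - A ∘L X x t) ∘L (Xinv x t ∘L M)) := by
            rw [hXAζ]
        _ = _ := by
            simp only [sub_comp, neg_comp, comp_sub, comp_neg, comp_assoc, hXK]
            abel
    have hσ : ∀ M : (Fin 2 → ℂ) →L[ℂ] (Fin 2 → ℂ), σ₁inv ∘L (σ₁ ∘L M) = M :=
      fun M => comp_cancel_aux σ₁inv σ₁ hσ₁inv M
    have hp0 : ∀ M : (Fin 2 → ℂ) →L[ℂ] H, ((A ^ 0 : H →L[ℂ] H)) ∘L M = M := by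
      intro M; rw [pow_zero, one_def, id_comp]
    have hp1 : ∀ M : (Fin 2 → ℂ) →L[ℂ] H, ((A ^ (n + 1) : H →L[ℂ] H)) ∘L M
        = A ∘L ((A ^ n) ∘L M) := by
      intro M; rw [pow_succ', mul_def, comp_assoc]
    have hp2 : ∀ M : (Fin 2 → ℂ) →L[ℂ] H, ((A ^ n : H →L[ℂ] H)) ∘L (A ∘L M)
        = A ∘L ((A ^ n) ∘L M) := by
      intro M
      rw [← comp_assoc, ← comp_assoc, ← mul_def, ← mul_def, ← pow_succ, ← pow_succ']
    simp only [kdvHx, comp_add, add_comp, comp_sub, sub_comp, comp_neg, neg_comp,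
      smul_comp, comp_smul, comp_assoc, hp0, hp1, hp2, hAζK, hσ, smul_add, smul_sub,
      smul_neg, comp_smul]
    module
  exact key ▸ hHt
end
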